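/- Let H₁, H₂ be real Hilbert spaces, M : H₁ → H₁ bounded self-adjoint coercive, K : H₂ → H₂ bounded self-adjoint coercive, B₁ : H₁ → K₀ and B₂ : H₂ → K₀ bounded linear into a Hilbert space K₀, c₀ > 0, h ∈ K₀, f ∈ H₁, g ∈ H₂. Suppose (u,q) ∈ H₁ × H₂ and p ∈ K₀ satisfy the coupled linear system: ⟨Mu,v⟩ − ⟨p, B₁v⟩ = ⟨f,v⟩ for all v ∈ H₁; c₀⟨p, r⟩ + ⟨B₁u, r⟩ + ⟨B₂q, r⟩ = ⟨h, r⟩ for all r ∈ K₀; ⟨Kq,w⟩ − ⟨p, B₂w⟩ = ⟨g,w⟩ for all w ∈ H₂. Then (u,q) is the unique minimizer of E(u,q) = ½⟨Mu,u⟩ + ½⟨Kq,q⟩ + (1/2c₀)‖h − B₁u − B₂q‖² − ⟨f,u⟩ − ⟨g,q⟩ over H₁ × H₂, and p = c₀⁻¹(h − B₁u − B₂q). Conversely, the minimizer of E together with this p solves the coupled system. -/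
import Mathlib


open scoped InnerProductSpace

private lemma pde_quad_aux {L C : ℝ} (hC : 0 ≤ C)
    (hq : ∀ t : ℝ, 0 ≤ t * L + t ^ 2 * C) : L = 0 := by
  have hT : (0:ℝ) < 2 * C + 1 := by linarith
  have h1 := hq (-(L / (2 * C + 1)))
  have h2 : -(L / (2 * C + 1)) * L + (-(L / (2 * C + 1))) ^ 2 * C
      = L ^ 2 * (C - (2 * C + 1)) / (2 * C + 1) ^ 2 := by
    field_simp; ring
  rw [h2] at h1
  have h4 : 0 ≤ L ^ 2 * (C - (2 * C + 1)) := by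
    by_contra hneg; push_neg at hneg
    have := div_neg_of_neg_of_pos hneg (by positivity : (0:ℝ) < (2 * C + 1) ^ 2)
    linarith
  have hL2 : L ^ 2 = 0 := le_antisymm (by nlinarith) (sq_nonneg L)
  exact pow_eq_zero_iff two_ne_zero |>.mp hL2

private lemma pde_key_expand {H₁ H₂ K₀ : Type*}
    [NormedAddCommGroup H₁] [InnerProductSpace ℝ H₁] [CompleteSpace H₁]
    [NormedAddCommGroup H₂] [InnerProductSpace ℝ H₂] [CompleteSpace H₂]
    [NormedAddCommGroup K₀] [InnerProductSpace ℝ K₀] [CompleteSpace K₀]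
    (M : H₁ →L[ℝ] H₁) (Kop : H₂ →L[ℝ] H₂)
    (hM : IsSelfAdjoint M) (hKop : IsSelfAdjoint Kop)
    (B₁ : H₁ →L[ℝ] K₀) (B₂ : H₂ →L[ℝ] K₀)
    (c₀ : ℝ) (hc₀ : 0 < c₀) (h : K₀) (f : H₁) (g : H₂)
    (E : H₁ → H₂ → ℝ)
    (hE : ∀ u q, E u q = (1 / 2) * ⟪M u, u⟫_ℝ + (1 / 2) * ⟪Kop q, q⟫_ℝ
      + (1 / (2 * c₀)) * ‖h - B₁ u - B₂ q‖ ^ 2 - ⟪f, u⟫_ℝ - ⟪g, q⟫_ℝ)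
    (u : H₁) (q : H₂) (a : H₁) (b : H₂) :
    E (u + a) (q + b) - E u q =
      (⟪M u, a⟫_ℝ - (1 / c₀) * ⟪h - B₁ u - B₂ q, B₁ a⟫_ℝ - ⟪f, a⟫_ℝ)
      + (⟪Kop q, b⟫_ℝ - (1 / c₀) * ⟪h - B₁ u - B₂ q, B₂ b⟫_ℝ - ⟪g, b⟫_ℝ)
      + (1 / 2) * ⟪M a, a⟫_ℝ + (1 / 2) * ⟪Kop b, b⟫_ℝ
      + (1 / (2 * c₀)) * ‖B₁ a + B₂ b‖ ^ 2 := by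
  have h1 : h - B₁ (u + a) - B₂ (q + b) = (h - B₁ u - B₂ q) - (B₁ a + B₂ b) := by
    rw [map_add, map_add]; abel
  rw [hE, hE, h1, norm_sub_sq_real, map_add, map_add]
  simp only [inner_add_left, inner_add_right]
  have hMs : ⟪M a, u⟫_ℝ = ⟪M u, a⟫_ℝ :=
    (hM.isSymmetric a u).trans (real_inner_comm a (M u)).symm
  have hKs : ⟪Kop b, q⟫_ℝ = ⟪Kop q, b⟫_ℝ :=
    (hKop.isSymmetric b q).trans (real_inner_comm b (Kop q)).symm
  rw [hMs, hKs]
  field_simp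
  ring

set_option maxHeartbeats 1000000 in
/-- equivalence of the three-field coupled linear system of
semi-discrete dynamic poroelasticity with the two-field minimization of the
energy `E(u,q) = ½⟨Mu,u⟩ + ½⟨Kq,q⟩ + (1/2c₀)‖h − B₁u − B₂q‖² − ⟨f,u⟩ − ⟨g,q⟩`
together with pressure post-processing `p = c₀⁻¹(h − B₁u − B₂q)`. -/
theorem three_field_system_iff_minimization
    {H₁ H₂ K₀ : Type*}
    [NormedAddCommGroup H₁] [InnerProductSpace ℝ H₁] [CompleteSpace H₁]
    [NormedAddCommGroup H₂] [InnerProductSpace ℝ H₂] [CompleteSpace H₂]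
    [NormedAddCommGroup K₀] [InnerProductSpace ℝ K₀] [CompleteSpace K₀]
    (M : H₁ →L[ℝ] H₁) (Kop : H₂ →L[ℝ] H₂)
    (hM : IsSelfAdjoint M) (hKop : IsSelfAdjoint Kop)
    (μM μK : ℝ) (hμM : 0 < μM) (hμK : 0 < μK)
    (hMco : ∀ v : H₁, μM * ‖v‖ ^ 2 ≤ ⟪M v, v⟫_ℝ)
    (hKco : ∀ w : H₂, μK * ‖w‖ ^ 2 ≤ ⟪Kop w, w⟫_ℝ)
    (B₁ : H₁ →L[ℝ] K₀) (B₂ : H₂ →L[ℝ] K₀)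
    (c₀ : ℝ) (hc₀ : 0 < c₀) (h : K₀) (f : H₁) (g : H₂)
    (E : H₁ → H₂ → ℝ)
    (hE : ∀ u q, E u q = (1 / 2) * ⟪M u, u⟫_ℝ + (1 / 2) * ⟪Kop q, q⟫_ℝ
      + (1 / (2 * c₀)) * ‖h - B₁ u - B₂ q‖ ^ 2 - ⟪f, u⟫_ℝ - ⟪g, q⟫_ℝ) :
    ∀ (u : H₁) (q : H₂) (p : K₀),
      ((∀ v : H₁, ⟪M u, v⟫_ℝ - ⟪p, B₁ v⟫_ℝ = ⟪f, v⟫_ℝ) ∧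
       (∀ r : K₀, c₀ * ⟪p, r⟫_ℝ + ⟪B₁ u, r⟫_ℝ + ⟪B₂ q, r⟫_ℝ = ⟪h, r⟫_ℝ) ∧
       (∀ w : H₂, ⟪Kop q, w⟫_ℝ - ⟪p, B₂ w⟫_ℝ = ⟪g, w⟫_ℝ)) ↔
      ((∀ (u' : H₁) (q' : H₂), E u q ≤ E u' q') ∧
       (∀ (u' : H₁) (q' : H₂),
          (∀ (u'' : H₁) (q'' : H₂), E u' q' ≤ E u'' q'') → u' = u ∧ q' = q) ∧
       p = c₀⁻¹ • (h - B₁ u - B₂ q)) := by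
  intro u q p
  have key := pde_key_expand M Kop hM hKop B₁ B₂ c₀ hc₀ h f g E hE u q
  constructor
  · rintro ⟨e1, e2, e3⟩
    -- derive the pressure formula
    have hcp : c₀ • p = h - B₁ u - B₂ q := by
      apply ext_inner_right ℝ
      intro r
      rw [real_inner_smul_left, inner_sub_left, inner_sub_left]
      linarith [e2 r]
    have hp : p = c₀⁻¹ • (h - B₁ u - B₂ q) := by
      rw [← hcp, smul_smul, inv_mul_cancel₀ hc₀.ne', one_smul]
    have hpinner : ∀ x : K₀, ⟪p, x⟫_ℝ = (1 / c₀) * ⟪h - B₁ u - B₂ q, x⟫_ℝ := by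
      intro x; rw [hp, real_inner_smul_left, one_div]
    -- minimality
    have hmin : ∀ (u' : H₁) (q' : H₂), E u q ≤ E u' q' := by
      intro u' q'
      have hk := key (u' - u) (q' - q)
      rw [show u + (u' - u) = u' by abel, show q + (q' - q) = q' by abel] at hk
      have hb1 : ⟪M u, u' - u⟫_ℝ - (1 / c₀) * ⟪h - B₁ u - B₂ q, B₁ (u' - u)⟫_ℝ
          - ⟪f, u' - u⟫_ℝ = 0 := by
        rw [← hpinner]; linarith [e1 (u' - u)]
      have hb2 : ⟪Kop q, q' - q⟫_ℝ - (1 / c₀) * ⟪h - B₁ u - B₂ q, B₂ (q' - q)⟫_ℝ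
          - ⟪g, q' - q⟫_ℝ = 0 := by
        rw [← hpinner]; linarith [e3 (q' - q)]
      have t1 : 0 ≤ ⟪M (u' - u), u' - u⟫_ℝ :=
        le_trans (by positivity) (hMco (u' - u))
      have t2 : 0 ≤ ⟪Kop (q' - q), q' - q⟫_ℝ :=
        le_trans (by positivity) (hKco (q' - q))
      have t3 : 0 ≤ (1 / (2 * c₀)) * ‖B₁ (u' - u) + B₂ (q' - q)‖ ^ 2 := by positivity
      linarith [hk, hb1, hb2]
    refine ⟨hmin, ?_, hp⟩
    -- uniqueness
    intro u' q' hmin'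
    have heq : E u' q' = E u q := le_antisymm (hmin' u q) (hmin u' q')
    have hk := key (u' - u) (q' - q)
    rw [show u + (u' - u) = u' by abel, show q + (q' - q) = q' by abel, heq] at hk
    have hb1 : ⟪M u, u' - u⟫_ℝ - (1 / c₀) * ⟪h - B₁ u - B₂ q, B₁ (u' - u)⟫_ℝ
        - ⟪f, u' - u⟫_ℝ = 0 := by
      rw [← hpinner]; linarith [e1 (u' - u)]
    have hb2 : ⟪Kop q, q' - q⟫_ℝ - (1 / c₀) * ⟪h - B₁ u - B₂ q, B₂ (q' - q)⟫_ℝ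
        - ⟪g, q' - q⟫_ℝ = 0 := by
      rw [← hpinner]; linarith [e3 (q' - q)]
    have t1 := hMco (u' - u)
    have t2 := hKco (q' - q)
    have t1' : 0 ≤ μM * ‖u' - u‖ ^ 2 := by positivity
    have t2' : 0 ≤ μK * ‖q' - q‖ ^ 2 := by positivity
    have t3 : 0 ≤ (1 / (2 * c₀)) * ‖B₁ (u' - u) + B₂ (q' - q)‖ ^ 2 := by positivity
    have ha : ‖u' - u‖ ^ 2 = 0 := by nlinarith
    have hb : ‖q' - q‖ ^ 2 = 0 := by nlinarith
    constructor
    · have := pow_eq_zero_iff two_ne_zero |>.mp ha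
      exact sub_eq_zero.mp (norm_eq_zero.mp this)
    · have := pow_eq_zero_iff two_ne_zero |>.mp hb
      exact sub_eq_zero.mp (norm_eq_zero.mp this)
  · rintro ⟨hmin, -, hp⟩
    have hpinner : ∀ x : K₀, ⟪p, x⟫_ℝ = (1 / c₀) * ⟪h - B₁ u - B₂ q, x⟫_ℝ := by
      intro x; rw [hp, real_inner_smul_left, one_div]
    refine ⟨?_, ?_, ?_⟩
    · -- first equation
      intro v
      have hC : 0 ≤ (1 / 2) * ⟪M v, v⟫_ℝ + (1 / (2 * c₀)) * ‖B₁ v‖ ^ 2 := by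
        have := le_trans (by positivity : (0:ℝ) ≤ μM * ‖v‖ ^ 2) (hMco v)
        have : (0:ℝ) ≤ (1 / (2 * c₀)) * ‖B₁ v‖ ^ 2 := by positivity
        linarith [le_trans (by positivity : (0:ℝ) ≤ μM * ‖v‖ ^ 2) (hMco v)]
      have hquad : ∀ t : ℝ,
          0 ≤ t * (⟪M u, v⟫_ℝ - (1 / c₀) * ⟪h - B₁ u - B₂ q, B₁ v⟫_ℝ - ⟪f, v⟫_ℝ)
            + t ^ 2 * ((1 / 2) * ⟪M v, v⟫_ℝ + (1 / (2 * c₀)) * ‖B₁ v‖ ^ 2) := by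
        intro t
        have hk := key (t • v) 0
        rw [add_zero] at hk
        simp only [map_smul, map_zero, add_zero, inner_zero_left, inner_zero_right,
          real_inner_smul_left, real_inner_smul_right, norm_smul, Real.norm_eq_abs,
          mul_pow, sq_abs] at hk
        have h0 : 0 ≤ E (u + t • v) q - E u q := by linarith [hmin (u + t • v) q]
        rw [hk] at h0
        exact le_of_le_of_eq h0 (by ring)
      have hL := pde_quad_aux hC hquad
      rw [hpinner]
      linarith
    · -- second equation
      intro r
      rw [hpinner, inner_sub_left, inner_sub_left]
      field_simp
      ring
    · -- third equation
      intro w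
      have hC : 0 ≤ (1 / 2) * ⟪Kop w, w⟫_ℝ + (1 / (2 * c₀)) * ‖B₂ w‖ ^ 2 := by
        have : (0:ℝ) ≤ (1 / (2 * c₀)) * ‖B₂ w‖ ^ 2 := by positivity
        linarith [le_trans (by positivity : (0:ℝ) ≤ μK * ‖w‖ ^ 2) (hKco w)]
      have hquad : ∀ t : ℝ,
          0 ≤ t * (⟪Kop q, w⟫_ℝ - (1 / c₀) * ⟪h - B₁ u - B₂ q, B₂ w⟫_ℝ - ⟪g, w⟫_ℝ)
            + t ^ 2 * ((1 / 2) * ⟪Kop w, w⟫_ℝ + (1 / (2 * c₀)) * ‖B₂ w‖ ^ 2) := by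
        intro t
        have hk := key 0 (t • w)
        rw [add_zero] at hk
        simp only [map_smul, map_zero, zero_add, add_zero, inner_zero_left,
          inner_zero_right, real_inner_smul_left, real_inner_smul_right, norm_smul,
          Real.norm_eq_abs, mul_pow, sq_abs] at hk
        have h0 : 0 ≤ E u (q + t • w) - E u q := by linarith [hmin u (q + t • w)]
        rw [hk] at h0
        exact le_of_le_of_eq h0 (by ring)
      have hL := pde_quad_aux hC hquad
      rw [hpinner]
      linarith
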